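/- For complex A, B, C, D and real β, define F(C,D) = (1/cosh(β/2))·exp(-(|A|²+|B|²+|C|²+|D|²)/2)·exp(tanh(β/2)·(A·conj(B) - conj(C)·D))·exp((A·conj(C) + conj(B)·D)/cosh(β/2)). Then (1/π²)·∫∫_{ℂ²} |F(C,D)|² dC dD = 1, where dC dD denotes Lebesgue measure on ℂ² (identifying ℂ with ℝ²). -/

import Mathlib

open MeasureTheory Real

lemma gauss1_integrable (a b : ℝ) (ha : 0 < a) :
    Integrable (fun x : ℝ => Real.exp (-(a * x ^ 2) + b * x)) := by
  have key : ∀ x : ℝ, Real.exp (b ^ 2 / (4 * a)) * Real.exp (-(a * (x - b / (2 * a)) ^ 2))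
      = Real.exp (-(a * x ^ 2) + b * x) := by
    intro x
    rw [← Real.exp_add]
    congr 1
    field_simp
    ring
  have h0 : Integrable (fun x : ℝ => Real.exp (-(a * x ^ 2))) := by
    simpa [neg_mul] using integrable_exp_neg_mul_sq ha
  have h1 := (h0.comp_sub_right (b / (2 * a))).const_mul (Real.exp (b ^ 2 / (4 * a)))
  exact h1.congr (Filter.Eventually.of_forall fun x => key x)

lemma gauss1 (a b : ℝ) (ha : 0 < a) :
    ∫ x : ℝ, Real.exp (-(a * x ^ 2) + b * x)
      = Real.sqrt (π / a) * Real.exp (b ^ 2 / (4 * a)) := by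
  have key : ∀ x : ℝ, Real.exp (-(a * x ^ 2) + b * x)
      = Real.exp (b ^ 2 / (4 * a)) * Real.exp (-(a * (x - b / (2 * a)) ^ 2)) := by
    intro x
    rw [← Real.exp_add]
    congr 1
    field_simp
    ring
  calc ∫ x : ℝ, Real.exp (-(a * x ^ 2) + b * x)
      = ∫ x : ℝ, Real.exp (b ^ 2 / (4 * a)) * Real.exp (-(a * (x - b / (2 * a)) ^ 2)) := by
        simp_rw [key]
    _ = Real.exp (b ^ 2 / (4 * a)) * ∫ x : ℝ, Real.exp (-(a * (x - b / (2 * a)) ^ 2)) :=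
        integral_const_mul _ _
    _ = Real.exp (b ^ 2 / (4 * a)) * ∫ x : ℝ, Real.exp (-(a * x ^ 2)) := by
        rw [integral_sub_right_eq_self (fun x : ℝ => Real.exp (-(a * x ^ 2))) (b / (2 * a))]
    _ = Real.sqrt (π / a) * Real.exp (b ^ 2 / (4 * a)) := by
        simp_rw [← neg_mul]
        rw [integral_gaussian a]
        ring

lemma cgauss_integrable (a b b' : ℝ) (ha : 0 < a) :
    Integrable (fun z : ℂ =>
      Real.exp (-(a * z.re ^ 2) + b * z.re) * Real.exp (-(a * z.im ^ 2) + b' * z.im)) := by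
  have h := (gauss1_integrable a b ha).mul_prod (gauss1_integrable a b' ha)
  exact (Complex.volume_preserving_equiv_real_prod.integrable_comp_emb
    Complex.measurableEquivRealProd.measurableEmbedding
    (g := fun p : ℝ × ℝ =>
      Real.exp (-(a * p.1 ^ 2) + b * p.1) * Real.exp (-(a * p.2 ^ 2) + b' * p.2))).2 h

lemma cgauss (a b b' : ℝ) (ha : 0 < a) :
    ∫ z : ℂ, Real.exp (-(a * z.re ^ 2) + b * z.re) * Real.exp (-(a * z.im ^ 2) + b' * z.im)
      = (Real.sqrt (π / a) * Real.exp (b ^ 2 / (4 * a)))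
        * (Real.sqrt (π / a) * Real.exp (b' ^ 2 / (4 * a))) := by
  have h1 : ∫ z : ℂ, Real.exp (-(a * z.re ^ 2) + b * z.re) * Real.exp (-(a * z.im ^ 2) + b' * z.im)
      = ∫ p : ℝ × ℝ, Real.exp (-(a * p.1 ^ 2) + b * p.1) * Real.exp (-(a * p.2 ^ 2) + b' * p.2) :=
    Complex.volume_preserving_equiv_real_prod.integral_comp
      Complex.measurableEquivRealProd.measurableEmbedding
      (fun p : ℝ × ℝ => Real.exp (-(a * p.1 ^ 2) + b * p.1) * Real.exp (-(a * p.2 ^ 2) + b' * p.2))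
  rw [h1, ← gauss1 a b ha, ← gauss1 a b' ha]
  exact integral_prod_mul (fun x : ℝ => Real.exp (-(a * x ^ 2) + b * x))
    (fun x : ℝ => Real.exp (-(a * x ^ 2) + b' * x))

lemma exp_shuffle (s u1 u2 v1 v2 : ℝ) :
    (Real.exp u1 * Real.exp u2) * ((s * Real.exp v1) * (s * Real.exp v2))
      = (s * s) * Real.exp ((u1 + u2) + (v1 + v2)) := by
  rw [Real.exp_add, Real.exp_add, Real.exp_add]; ring

/-- Boost invariance of the coherent-state norm:
`(1/π²) ∫∫_{ℂ²} |F(C,D)|² dC dD = 1` where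
`F(C,D) = (1/cosh(β/2)) exp(-(|A|²+|B|²+|C|²+|D|²)/2)
  · exp(tanh(β/2)(A B̄ - C̄ D)) · exp((A C̄ + B̄ D)/cosh(β/2))`. -/
theorem coherent_state_boost_norm (A B : ℂ) (β : ℝ) :
    (1 / (Real.pi : ℝ) ^ 2) *
      ∫ p : ℂ × ℂ,
        ‖((1 / (Real.cosh (β / 2) : ℂ)) *
            Complex.exp (-((‖A‖ ^ 2 + ‖B‖ ^ 2
                + ‖p.1‖ ^ 2 + ‖p.2‖ ^ 2 : ℝ) : ℂ) / 2) *
            Complex.exp ((Real.tanh (β / 2) : ℂ) *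
              (A * (starRingEnd ℂ) B - (starRingEnd ℂ) p.1 * p.2)) *
            Complex.exp ((A * (starRingEnd ℂ) p.1 + (starRingEnd ℂ) B * p.2)
              / (Real.cosh (β / 2) : ℂ)))‖ ^ 2 = 1 := by
  set t : ℝ := Real.tanh (β / 2) with htdef
  set c : ℝ := Real.cosh (β / 2) with hcdef
  have hc : 0 < c := Real.cosh_pos _
  have hc0 : c ≠ 0 := ne_of_gt hc
  have hc2 : 1 - t ^ 2 = 1 / c ^ 2 := by
    rw [htdef, hcdef, Real.tanh_eq_sinh_div_cosh]
    have h := Real.cosh_sq_sub_sinh_sq (β / 2)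
    have hcc : Real.cosh (β / 2) ≠ 0 := ne_of_gt (Real.cosh_pos _)
    field_simp
    exact h
  have ht2 : t ^ 2 < 1 := by nlinarith [one_div_pos.mpr (pow_pos hc 2)]
  have hat : 0 < 1 - |t| := by
    have h1 : |t| ^ 2 < 1 := by rwa [sq_abs]
    nlinarith [abs_nonneg t]
  have h1t2 : 0 < 1 - t ^ 2 := by linarith
  -- pointwise formula for the integrand
  have hpt : ∀ p : ℂ × ℂ,
      ‖((1 / (c : ℂ)) *
            Complex.exp (-((‖A‖ ^ 2 + ‖B‖ ^ 2
                + ‖p.1‖ ^ 2 + ‖p.2‖ ^ 2 : ℝ) : ℂ) / 2) *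
            Complex.exp ((t : ℂ) *
              (A * (starRingEnd ℂ) B - (starRingEnd ℂ) p.1 * p.2)) *
            Complex.exp ((A * (starRingEnd ℂ) p.1 + (starRingEnd ℂ) B * p.2)
              / (c : ℂ)))‖ ^ 2
        = (Real.exp (-(A.re ^ 2 + A.im ^ 2 + B.re ^ 2 + B.im ^ 2)
              + 2 * t * (A.re * B.re + A.im * B.im)) / c ^ 2) *
          (Real.exp (-p.1.re ^ 2 - p.2.re ^ 2 - 2 * t * (p.1.re * p.2.re)
              + (2 * A.re / c * p.1.re + 2 * B.re / c * p.2.re))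
            * Real.exp (-p.1.im ^ 2 - p.2.im ^ 2 - 2 * t * (p.1.im * p.2.im)
              + (2 * A.im / c * p.1.im + 2 * B.im / c * p.2.im))) := by
    intro p
    rw [norm_mul, norm_mul, norm_mul, norm_div, norm_one, Complex.norm_exp, Complex.norm_exp,
      Complex.norm_exp, Complex.norm_real, Real.norm_eq_abs, abs_of_pos hc]
    have hcomb : ∀ u v w : ℝ,
        ((1 / c) * Real.exp u * Real.exp v * Real.exp w) ^ 2
          = Real.exp (2 * u + 2 * v + 2 * w) / c ^ 2 := by
      intro u v w
      rw [Real.exp_add, Real.exp_add, two_mul, two_mul, two_mul, Real.exp_add, Real.exp_add,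
        Real.exp_add]
      ring
    have hcomb2 : ∀ u v w : ℝ,
        (Real.exp u / c ^ 2) * (Real.exp v * Real.exp w) = Real.exp (u + v + w) / c ^ 2 := by
      intro u v w
      rw [Real.exp_add, Real.exp_add]
      ring
    rw [hcomb, hcomb2]
    congr 2
    simp only [Complex.add_re, Complex.sub_re, Complex.neg_re, Complex.mul_re, Complex.mul_im,
      Complex.ofReal_re, Complex.ofReal_im, Complex.conj_re, Complex.conj_im,
      Complex.div_ofReal_re, Complex.div_ofNat_re, Complex.sq_norm, Complex.normSq_apply]
    ring
  simp only [hpt]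
  rw [integral_const_mul]
  have hG1 := cgauss_integrable (1 - |t|) (2 * A.re / c) (2 * A.im / c) hat
  have hG2 := cgauss_integrable (1 - |t|) (2 * B.re / c) (2 * B.im / c) hat
  have hIntH : Integrable (fun p : ℂ × ℂ =>
      Real.exp (-p.1.re ^ 2 - p.2.re ^ 2 - 2 * t * (p.1.re * p.2.re)
          + (2 * A.re / c * p.1.re + 2 * B.re / c * p.2.re))
        * Real.exp (-p.1.im ^ 2 - p.2.im ^ 2 - 2 * t * (p.1.im * p.2.im)
          + (2 * A.im / c * p.1.im + 2 * B.im / c * p.2.im)))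
      ((volume : Measure ℂ).prod volume) := by
    refine (hG1.mul_prod hG2).mono' ?_ ?_
    · apply Measurable.aestronglyMeasurable
      fun_prop
    · filter_upwards with p
      rw [Real.norm_eq_abs, abs_of_nonneg (by positivity)]
      simp only [← Real.exp_add]
      refine Real.exp_le_exp.2 ?_
      nlinarith [mul_nonneg (by linarith [neg_abs_le t] : (0:ℝ) ≤ |t| + t)
          (sq_nonneg (p.1.re + p.2.re)),
        mul_nonneg (by linarith [le_abs_self t] : (0:ℝ) ≤ |t| - t)
          (sq_nonneg (p.1.re - p.2.re)),
        mul_nonneg (by linarith [neg_abs_le t] : (0:ℝ) ≤ |t| + t)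
          (sq_nonneg (p.1.im + p.2.im)),
        mul_nonneg (by linarith [le_abs_self t] : (0:ℝ) ≤ |t| - t)
          (sq_nonneg (p.1.im - p.2.im))]
  rw [show (volume : Measure (ℂ × ℂ)) = (volume : Measure ℂ).prod volume from rfl]
  rw [integral_prod _ hIntH]
  have hinner : ∀ C : ℂ,
      (∫ D : ℂ, Real.exp (-C.re ^ 2 - D.re ^ 2 - 2 * t * (C.re * D.re)
          + (2 * A.re / c * C.re + 2 * B.re / c * D.re))
        * Real.exp (-C.im ^ 2 - D.im ^ 2 - 2 * t * (C.im * D.im)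
          + (2 * A.im / c * C.im + 2 * B.im / c * D.im)))
      = (Real.sqrt (π / 1) * Real.sqrt (π / 1)) *
          Real.exp (((-C.re ^ 2 + 2 * A.re / c * C.re) + (-C.im ^ 2 + 2 * A.im / c * C.im))
            + ((2 * B.re / c - 2 * t * C.re) ^ 2 / (4 * 1)
              + (2 * B.im / c - 2 * t * C.im) ^ 2 / (4 * 1))) := by
    intro C
    have hsplit : ∀ D : ℂ,
        Real.exp (-C.re ^ 2 - D.re ^ 2 - 2 * t * (C.re * D.re)
            + (2 * A.re / c * C.re + 2 * B.re / c * D.re))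
          * Real.exp (-C.im ^ 2 - D.im ^ 2 - 2 * t * (C.im * D.im)
            + (2 * A.im / c * C.im + 2 * B.im / c * D.im))
        = (Real.exp (-C.re ^ 2 + 2 * A.re / c * C.re)
            * Real.exp (-C.im ^ 2 + 2 * A.im / c * C.im)) *
          (Real.exp (-(1 * D.re ^ 2) + (2 * B.re / c - 2 * t * C.re) * D.re)
            * Real.exp (-(1 * D.im ^ 2) + (2 * B.im / c - 2 * t * C.im) * D.im)) := by
      intro D
      simp only [← Real.exp_add]
      congr 1
      ring
    simp only [hsplit]
    rw [integral_const_mul, cgauss 1 _ _ one_pos, exp_shuffle]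
  simp only [hinner]
  have hmul3 : ∀ r a b d : ℝ,
      (r * Real.exp a) * (Real.exp b * Real.exp d) = r * Real.exp (a + b + d) := by
    intro r a b d
    rw [Real.exp_add, Real.exp_add]
    ring
  have hsplit2 : ∀ C : ℂ,
      (Real.sqrt (π / 1) * Real.sqrt (π / 1)) *
          Real.exp (((-C.re ^ 2 + 2 * A.re / c * C.re) + (-C.im ^ 2 + 2 * A.im / c * C.im))
            + ((2 * B.re / c - 2 * t * C.re) ^ 2 / (4 * 1)
              + (2 * B.im / c - 2 * t * C.im) ^ 2 / (4 * 1)))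
        = ((Real.sqrt (π / 1) * Real.sqrt (π / 1)) *
            Real.exp (B.re ^ 2 / c ^ 2 + B.im ^ 2 / c ^ 2)) *
          (Real.exp (-((1 - t ^ 2) * C.re ^ 2) + (2 * (A.re - t * B.re) / c) * C.re)
            * Real.exp (-((1 - t ^ 2) * C.im ^ 2) + (2 * (A.im - t * B.im) / c) * C.im)) := by
    intro C
    rw [hmul3]
    congr 1
    field_simp
    ring
  simp only [hsplit2]
  rw [integral_const_mul, cgauss (1 - t ^ 2) _ _ h1t2]
  have hmerge : ∀ s u v : ℝ,
      (s * Real.exp u) * (s * Real.exp v) = (s * s) * Real.exp (u + v) := by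
    intro s u v
    rw [Real.exp_add]
    ring
  rw [hmerge]
  have hs : Real.sqrt (π / 1) * Real.sqrt (π / 1) = π := by
    rw [div_one]
    exact Real.mul_self_sqrt pi_pos.le
  have hs' : Real.sqrt (π / (1 - t ^ 2)) * Real.sqrt (π / (1 - t ^ 2)) = π * c ^ 2 := by
    rw [Real.mul_self_sqrt (div_nonneg pi_pos.le h1t2.le), hc2]
    field_simp
  rw [hs, hs']
  have hfin : ∀ u v w : ℝ,
      Real.exp u / c ^ 2 * ((π * Real.exp v) * ((π * c ^ 2) * Real.exp w))
        = π ^ 2 * Real.exp (u + v + w) := by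
    intro u v w
    rw [Real.exp_add, Real.exp_add]
    field_simp
  rw [hfin]
  have hE : (-(A.re ^ 2 + A.im ^ 2 + B.re ^ 2 + B.im ^ 2)
        + 2 * t * (A.re * B.re + A.im * B.im))
      + (B.re ^ 2 / c ^ 2 + B.im ^ 2 / c ^ 2)
      + ((2 * (A.re - t * B.re) / c) ^ 2 / (4 * (1 - t ^ 2))
        + (2 * (A.im - t * B.im) / c) ^ 2 / (4 * (1 - t ^ 2))) = 0 := by
    rw [hc2]
    have hcs : c ^ 2 * (1 - t ^ 2) = 1 := by
      rw [hc2]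
      field_simp
    field_simp
    linear_combination (-(4:ℝ)) * (B.re ^ 2 + B.im ^ 2) * hcs
  rw [hE, Real.exp_zero, mul_one, one_div, inv_mul_cancel₀ (pow_ne_zero 2 Real.pi_ne_zero)]
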